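/- Let f₀(y) = G_γ^{−1} exp(−2|y|^{γ+1}/(γ+1)) with γ ≥ 0, and let F₀ be its distribution function. Then there exist constants C > 0 and κ > 0 such that for all y ∈ ℝ: (F₀(y)−1)² ∫_{−∞}^{y} F₀(z)²/f₀(z) dz + F₀(y)² ∫_{y}^{∞} (F₀(z)−1)²/f₀(z) dz ≤ C e^{−κ|y|^{γ+1}}. -/

import Mathlib

open MeasureTheory Real

/-- Normalizing constant `G_γ`. -/
noncomputable def Gg (γ : ℝ) : ℝ :=
  (2 / (γ + 1)) ^ (γ / (γ + 1)) * Real.Gamma (1 / (γ + 1))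

/-- Density with parameters `α = 0, β = 1, σ = 1`. -/
noncomputable def f0 (γ y : ℝ) : ℝ :=
  (Gg γ)⁻¹ * Real.exp (-(2 * |y| ^ (γ + 1)) / (γ + 1))

/-- Its distribution function. -/
noncomputable def F0 (γ y : ℝ) : ℝ := ∫ z in Set.Iic y, f0 γ z

namespace Stmt3
open Set


variable {γ : ℝ}

/-- `c = 2/(γ+1)`. -/
noncomputable def c (γ : ℝ) : ℝ := 2 / (γ + 1)

lemma hp_pos (hγ : 0 ≤ γ) : 0 < γ + 1 := by linarith

lemma c_pos (hγ : 0 ≤ γ) : 0 < c γ := div_pos two_pos (hp_pos hγ)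

lemma Gg_pos (hγ : 0 ≤ γ) : 0 < Gg γ := by
  have h := hp_pos hγ
  exact mul_pos (Real.rpow_pos_of_pos (by positivity) _)
    (Real.Gamma_pos_of_pos (by positivity))

lemma f0_eq (hγ : 0 ≤ γ) (z : ℝ) :
    f0 γ z = (Gg γ)⁻¹ * Real.exp (-(c γ * |z| ^ (γ + 1))) := by
  unfold f0 c
  congr 1
  congr 1
  ring

lemma f0_pos (hγ : 0 ≤ γ) (y : ℝ) : 0 < f0 γ y :=
  mul_pos (inv_pos.2 (Gg_pos hγ)) (Real.exp_pos _)

lemma f0_even (γ y : ℝ) : f0 γ (-y) = f0 γ y := by simp [f0]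

lemma f0_continuous (hγ : 0 ≤ γ) : Continuous (f0 γ) := by
  have h1 : Continuous fun y : ℝ => |y| ^ (γ + 1) :=
    continuous_abs.rpow_const (fun x => Or.inr (by linarith))
  exact continuous_const.mul (((continuous_const.mul h1).neg.div_const _).rexp)

lemma abs_rpow_lb (hγ : 0 ≤ γ) (z : ℝ) : |z| - 1 ≤ |z| ^ (γ + 1) := by
  rcases le_or_gt |z| 1 with h | h
  · have : (0:ℝ) ≤ |z| ^ (γ + 1) := Real.rpow_nonneg (abs_nonneg z) _
    linarith
  · calc |z| - 1 ≤ |z| := by linarith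
      _ = |z| ^ (1:ℝ) := (Real.rpow_one _).symm
      _ ≤ |z| ^ (γ + 1) := Real.rpow_le_rpow_of_exponent_le h.le (by linarith)

lemma f0_le (hγ : 0 ≤ γ) {a b : ℝ} (hb : 0 ≤ b) (hab : a + b ≤ c γ) (z : ℝ) :
    f0 γ z ≤ (Gg γ)⁻¹ * Real.exp (b - (a * |z| ^ (γ + 1) + b * |z|)) := by
  rw [f0_eq hγ]
  have h1 := abs_rpow_lb hγ z
  have h2 : (0:ℝ) ≤ |z| ^ (γ + 1) := Real.rpow_nonneg (abs_nonneg z) _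
  refine mul_le_mul_of_nonneg_left ?_ (inv_nonneg.2 (Gg_pos hγ).le)
  rw [Real.exp_le_exp]
  nlinarith [mul_le_mul_of_nonneg_right hab h2, mul_le_mul_of_nonneg_left h1 hb]

lemma even_integrable {f : ℝ → ℝ} (hf : ∀ x, f (-x) = f x)
    (h : IntegrableOn f (Ici 0)) : Integrable f := by
  rw [← integrableOn_univ, ← Iio_union_Ici (a := (0:ℝ)), integrableOn_union]
  refine ⟨?_, h⟩
  rw [← (Measure.measurePreserving_neg (volume : Measure ℝ)).integrableOn_comp_preimage
      (Homeomorph.neg ℝ).measurableEmbedding]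
  simp only [Function.comp_def, hf, neg_preimage, neg_Iio, neg_zero]
  exact h.mono_set Ioi_subset_Ici_self

lemma integrable_exp_abs {a : ℝ} (ha : 0 < a) :
    Integrable (fun z : ℝ => Real.exp (-(a * |z|))) := by
  refine even_integrable (fun x => by rw [abs_neg]) ?_
  rw [integrableOn_Ici_iff_integrableOn_Ioi]
  refine (exp_neg_integrableOn_Ioi 0 ha).congr_fun (fun x hx => ?_) measurableSet_Ioi
  simp only [abs_of_pos (show (0:ℝ) < x from hx), neg_mul]

lemma f0_integrable (hγ : 0 ≤ γ) : Integrable (f0 γ) := by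
  refine Integrable.mono' (((integrable_exp_abs (c_pos hγ)).const_mul
      ((Gg γ)⁻¹ * Real.exp (c γ)))) ((f0_continuous hγ).aestronglyMeasurable)
    (Filter.Eventually.of_forall fun z => ?_)
  rw [Real.norm_eq_abs, abs_of_pos (f0_pos hγ z)]
  have := f0_le hγ (a := 0) (b := c γ) (c_pos hγ).le (by linarith) z
  simpa [mul_assoc, ← Real.exp_add, sub_eq_add_neg] using this


lemma integral_f0 (hγ : 0 ≤ γ) : ∫ z : ℝ, f0 γ z = 1 := by
  have hp := hp_pos hγ
  have hc := c_pos hγ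
  have h1 : ∫ z : ℝ, f0 γ z
      = (Gg γ)⁻¹ * ∫ z : ℝ, (fun x : ℝ => Real.exp (-(c γ) * x ^ (γ + 1))) |z| := by
    rw [← integral_const_mul]
    refine integral_congr_ae (Filter.Eventually.of_forall fun z => ?_)
    rw [f0_eq hγ]
    norm_num
  rw [h1, integral_comp_abs (f := fun x : ℝ => Real.exp (-(c γ) * x ^ (γ + 1))),
    integral_exp_neg_mul_rpow hp hc]
  have hΓ : Real.Gamma (1 / (γ + 1) + 1) = (1 / (γ + 1)) * Real.Gamma (1 / (γ + 1)) :=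
    Real.Gamma_add_one (by positivity)
  rw [hΓ]
  have hkey : (2 : ℝ) * ((c γ) ^ (-1 / (γ + 1)) * (1 / (γ + 1) * Real.Gamma (1 / (γ + 1))))
      = Gg γ := by
    unfold Gg c
    rw [show (2:ℝ) * ((2 / (γ + 1)) ^ (-1 / (γ + 1)) * (1 / (γ + 1) * Real.Gamma (1 / (γ + 1))))
        = ((2 / (γ + 1)) ^ ((1:ℝ)) * (2 / (γ + 1)) ^ (-1 / (γ + 1))) * Real.Gamma (1 / (γ + 1))
        from by rw [Real.rpow_one]; field_simp]
    rw [← Real.rpow_add (by positivity)]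
    congr 2
    field_simp
    ring
  rw [hkey, inv_mul_cancel₀ (Gg_pos hγ).ne']

lemma F0_nonneg (hγ : 0 ≤ γ) (y : ℝ) : 0 ≤ F0 γ y :=
  setIntegral_nonneg measurableSet_Iic fun z _ => (f0_pos hγ z).le

lemma F0_mono (hγ : 0 ≤ γ) : Monotone (F0 γ) := fun a b hab =>
  setIntegral_mono_set (f0_integrable hγ).integrableOn
    (Filter.Eventually.of_forall fun z => (f0_pos hγ z).le)
    ((Iic_subset_Iic.2 hab).eventuallyLE)

lemma F0_le_one (hγ : 0 ≤ γ) (y : ℝ) : F0 γ y ≤ 1 := by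
  rw [← integral_f0 hγ]
  exact setIntegral_le_integral (f0_integrable hγ)
    (Filter.Eventually.of_forall fun z => (f0_pos hγ z).le)

lemma F0_neg (hγ : 0 ≤ γ) (y : ℝ) : F0 γ (-y) = 1 - F0 γ y := by
  have h1 : F0 γ (-y) = ∫ z in Ioi y, f0 γ z := by
    unfold F0
    rw [← integral_comp_neg_Ioi]
    exact setIntegral_congr_fun measurableSet_Ioi fun z _ => f0_even γ z
  have h2 := integral_add_compl (measurableSet_Iic (a := y)) (f0_integrable hγ)
  rw [compl_Iic, integral_f0 hγ] at h2
  rw [h1]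
  have h3 : F0 γ y = ∫ x in Iic y, f0 γ x := rfl
  rw [h3]
  linarith

lemma F0_measurable (hγ : 0 ≤ γ) : Measurable (F0 γ) := (F0_mono hγ).measurable

noncomputable def Ia (γ : ℝ) : ℝ := ∫ z : ℝ, Real.exp (-(c γ / 8 * |z|))
noncomputable def K (γ : ℝ) : ℝ := (Gg γ)⁻¹ * Real.exp (c γ / 4) * Ia γ
noncomputable def M (γ : ℝ) : ℝ := Gg γ * K γ ^ 2
noncomputable def A (γ y : ℝ) : ℝ := ∫ z in Set.Iic y, (F0 γ z) ^ 2 / f0 γ z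
noncomputable def C' (γ : ℝ) : ℝ :=
  M γ * Ia γ + K γ ^ 2 * (M γ * Ia γ) + K γ ^ 2 * Gg γ * (4 / c γ)

lemma Ia_nonneg (γ : ℝ) : 0 ≤ Ia γ := integral_nonneg fun z => (Real.exp_pos _).le
lemma K_nonneg (hγ : 0 ≤ γ) : 0 ≤ K γ :=
  mul_nonneg (mul_nonneg (inv_nonneg.2 (Gg_pos hγ).le) (Real.exp_pos _).le) (Ia_nonneg γ)
lemma M_nonneg (hγ : 0 ≤ γ) : 0 ≤ M γ := mul_nonneg (Gg_pos hγ).le (sq_nonneg _)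

lemma F0_tail (hγ : 0 ≤ γ) {y : ℝ} (hy : y ≤ 0) :
    F0 γ y ≤ K γ * Real.exp (-(3 * c γ / 4 * |y| ^ (γ + 1) + c γ / 8 * |y|)) := by
  have hc := c_pos hγ
  set D : ℝ := (Gg γ)⁻¹ * Real.exp (c γ / 4) *
    Real.exp (-(3 * c γ / 4 * |y| ^ (γ + 1) + c γ / 8 * |y|)) with hD
  have hG := Gg_pos hγ
  have hD0 : 0 ≤ D := by positivity
  calc F0 γ y ≤ ∫ z in Iic y, D * Real.exp (-(c γ / 8 * |z|)) := by
        refine setIntegral_mono_on (f0_integrable hγ).integrableOn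
          (((integrable_exp_abs (a := c γ / 8) (by positivity)).const_mul D).integrableOn)
          measurableSet_Iic (fun z hz => ?_)
        have hz' : z ≤ y := hz
        have habs : |y| ≤ |z| := by
          rw [abs_of_nonpos hy, abs_of_nonpos (hz'.trans hy)]; linarith
        have hpow : |y| ^ (γ + 1) ≤ |z| ^ (γ + 1) :=
          Real.rpow_le_rpow (abs_nonneg y) habs (by linarith)
        refine (f0_le hγ (a := 3 * c γ / 4) (b := c γ / 4) (by positivity)
          (le_of_eq (by unfold c; ring)) z).trans ?_
        rw [hD, mul_assoc, mul_assoc, ← Real.exp_add, ← Real.exp_add]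
        refine mul_le_mul_of_nonneg_left ?_ (inv_nonneg.2 (Gg_pos hγ).le)
        rw [Real.exp_le_exp]
        nlinarith [abs_nonneg z, abs_nonneg y]
    _ = D * ∫ z in Iic y, Real.exp (-(c γ / 8 * |z|)) := integral_const_mul D _
    _ ≤ D * Ia γ := by
        refine mul_le_mul_of_nonneg_left ?_ hD0
        exact setIntegral_le_integral (integrable_exp_abs (by positivity))
          (Filter.Eventually.of_forall fun z => (Real.exp_pos _).le)
    _ = K γ * Real.exp (-(3 * c γ / 4 * |y| ^ (γ + 1) + c γ / 8 * |y|)) := by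
        rw [hD]; unfold K; ring

lemma g_nonneg (hγ : 0 ≤ γ) (z : ℝ) : 0 ≤ (F0 γ z) ^ 2 / f0 γ z :=
  div_nonneg (sq_nonneg _) (f0_pos hγ z).le

lemma g_measurable (hγ : 0 ≤ γ) : Measurable (fun z => (F0 γ z) ^ 2 / f0 γ z) :=
  ((F0_measurable hγ).pow_const 2).div (f0_continuous hγ).measurable

lemma g_le_neg (hγ : 0 ≤ γ) {z : ℝ} (hz : z ≤ 0) :
    (F0 γ z) ^ 2 / f0 γ z ≤ M γ * Real.exp (-(c γ / 2 * |z| ^ (γ + 1) + c γ / 4 * |z|)) := by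
  rw [div_le_iff₀ (f0_pos hγ z), f0_eq hγ]
  calc (F0 γ z) ^ 2
      ≤ (K γ * Real.exp (-(3 * c γ / 4 * |z| ^ (γ + 1) + c γ / 8 * |z|))) ^ 2 :=
        pow_le_pow_left₀ (F0_nonneg hγ z) (F0_tail hγ hz) 2
    _ = K γ ^ 2 * Real.exp ((-(3 * c γ / 4 * |z| ^ (γ + 1) + c γ / 8 * |z|)) +
          (-(3 * c γ / 4 * |z| ^ (γ + 1) + c γ / 8 * |z|))) := by
        rw [mul_pow, sq (Real.exp _), ← Real.exp_add]
    _ = M γ * Real.exp (-(c γ / 2 * |z| ^ (γ + 1) + c γ / 4 * |z|)) *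
          ((Gg γ)⁻¹ * Real.exp (-(c γ * |z| ^ (γ + 1)))) := by
        rw [show M γ * Real.exp (-(c γ / 2 * |z| ^ (γ + 1) + c γ / 4 * |z|)) *
            ((Gg γ)⁻¹ * Real.exp (-(c γ * |z| ^ (γ + 1))))
          = (Gg γ * (Gg γ)⁻¹) * (K γ ^ 2 *
            (Real.exp (-(c γ / 2 * |z| ^ (γ + 1) + c γ / 4 * |z|)) *
             Real.exp (-(c γ * |z| ^ (γ + 1))))) from by unfold M; ring,
          mul_inv_cancel₀ (Gg_pos hγ).ne', ← Real.exp_add, one_mul]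
        congr 2
        ring

lemma g_le_pos (hγ : 0 ≤ γ) {z : ℝ} (hz : 0 ≤ z) :
    (F0 γ z) ^ 2 / f0 γ z ≤ Gg γ * Real.exp (c γ * z ^ (γ + 1)) := by
  rw [div_le_iff₀ (f0_pos hγ z), f0_eq hγ, abs_of_nonneg hz]
  have h1 : Gg γ * Real.exp (c γ * z ^ (γ + 1)) *
      ((Gg γ)⁻¹ * Real.exp (-(c γ * z ^ (γ + 1)))) = 1 := by
    rw [show Gg γ * Real.exp (c γ * z ^ (γ + 1)) *
        ((Gg γ)⁻¹ * Real.exp (-(c γ * z ^ (γ + 1))))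
      = (Gg γ * (Gg γ)⁻¹) * (Real.exp (c γ * z ^ (γ + 1)) *
        Real.exp (-(c γ * z ^ (γ + 1)))) from by ring,
      mul_inv_cancel₀ (Gg_pos hγ).ne', ← Real.exp_add, add_neg_cancel, Real.exp_zero, one_mul]
  rw [h1]
  nlinarith [F0_nonneg hγ z, F0_le_one hγ z]

lemma g_integrableOn (hγ : 0 ≤ γ) (y : ℝ) :
    IntegrableOn (fun z => (F0 γ z) ^ 2 / f0 γ z) (Iic y) := by
  have hc := c_pos hγ
  have hIic0 : IntegrableOn (fun z => (F0 γ z) ^ 2 / f0 γ z) (Iic 0) := by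
    refine Integrable.mono' (((integrable_exp_abs (a := c γ / 4) (by positivity)).const_mul
        (M γ)).integrableOn) ((g_measurable hγ).aestronglyMeasurable.restrict) ?_
    filter_upwards [ae_restrict_mem measurableSet_Iic] with z hz
    rw [Real.norm_eq_abs, abs_of_nonneg (g_nonneg hγ z)]
    refine (g_le_neg hγ hz).trans (mul_le_mul_of_nonneg_left ?_ (M_nonneg hγ))
    rw [Real.exp_le_exp]
    have : (0:ℝ) ≤ c γ / 2 * |z| ^ (γ + 1) := by positivity
    linarith
  rcases le_or_gt y 0 with h | h
  · exact hIic0.mono_set (Iic_subset_Iic.2 h)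
  · rw [← Iic_union_Ioc_eq_Iic h.le, integrableOn_union]
    refine ⟨hIic0, ?_⟩
    refine Integrable.mono'
      ((integrableOn_const measure_Ioc_lt_top.ne :
        IntegrableOn (fun _ => Gg γ * Real.exp (c γ * y ^ (γ + 1))) (Ioc 0 y) volume))
      ((g_measurable hγ).aestronglyMeasurable.restrict) ?_
    filter_upwards [ae_restrict_mem measurableSet_Ioc] with z hz
    rw [Real.norm_eq_abs, abs_of_nonneg (g_nonneg hγ z)]
    refine (g_le_pos hγ hz.1.le).trans (mul_le_mul_of_nonneg_left ?_ (Gg_pos hγ).le)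
    rw [Real.exp_le_exp]
    exact mul_le_mul_of_nonneg_left
      (Real.rpow_le_rpow hz.1.le hz.2 (by linarith)) hc.le

lemma A_nonneg (hγ : 0 ≤ γ) (y : ℝ) : 0 ≤ A γ y :=
  setIntegral_nonneg measurableSet_Iic fun z _ => g_nonneg hγ z

lemma A_le_neg (hγ : 0 ≤ γ) {y : ℝ} (hy : y ≤ 0) :
    A γ y ≤ M γ * Ia γ * Real.exp (-(c γ / 2 * |y| ^ (γ + 1))) := by
  have hc := c_pos hγ
  set D : ℝ := M γ * Real.exp (-(c γ / 2 * |y| ^ (γ + 1))) with hD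
  have hD0 : 0 ≤ D := mul_nonneg (M_nonneg hγ) (Real.exp_pos _).le
  calc A γ y ≤ ∫ z in Iic y, D * Real.exp (-(c γ / 8 * |z|)) := by
        refine setIntegral_mono_on (g_integrableOn hγ y)
          (((integrable_exp_abs (a := c γ / 8) (by positivity)).const_mul D).integrableOn)
          measurableSet_Iic (fun z hz => ?_)
        have hz' : z ≤ y := hz
        have habs : |y| ≤ |z| := by
          rw [abs_of_nonpos hy, abs_of_nonpos (hz'.trans hy)]; linarith
        have hpow : |y| ^ (γ + 1) ≤ |z| ^ (γ + 1) :=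
          Real.rpow_le_rpow (abs_nonneg y) habs (by linarith)
        refine (g_le_neg hγ (hz'.trans hy)).trans ?_
        rw [hD, mul_assoc, ← Real.exp_add]
        refine mul_le_mul_of_nonneg_left ?_ (M_nonneg hγ)
        rw [Real.exp_le_exp]
        nlinarith [abs_nonneg z, abs_nonneg y]
    _ = D * ∫ z in Iic y, Real.exp (-(c γ / 8 * |z|)) := integral_const_mul D _
    _ ≤ D * Ia γ := by
        refine mul_le_mul_of_nonneg_left ?_ hD0
        exact setIntegral_le_integral (integrable_exp_abs (by positivity))
          (Filter.Eventually.of_forall fun z => (Real.exp_pos _).le)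
    _ = M γ * Ia γ * Real.exp (-(c γ / 2 * |y| ^ (γ + 1))) := by rw [hD]; ring

lemma A_zero_le (hγ : 0 ≤ γ) : A γ 0 ≤ M γ * Ia γ := by
  have h := A_le_neg hγ (le_refl (0:ℝ))
  rw [abs_zero, Real.zero_rpow (by positivity : γ + 1 ≠ 0)] at h
  simpa using h

lemma A_le_pos (hγ : 0 ≤ γ) {y : ℝ} (hy : 0 ≤ y) :
    A γ y ≤ M γ * Ia γ + Gg γ * Real.exp (c γ * y ^ (γ + 1)) * y := by
  have hc := c_pos hγ
  have hsplit : A γ y = A γ 0 + ∫ z in Ioc 0 y, (F0 γ z) ^ 2 / f0 γ z := by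
    unfold A
    rw [← setIntegral_union (Iic_disjoint_Ioc (le_refl (0:ℝ))) measurableSet_Ioc
      (g_integrableOn hγ 0) ((g_integrableOn hγ y).mono_set Ioc_subset_Iic_self),
      Iic_union_Ioc_eq_Iic hy]
  have h2 : ∫ z in Ioc 0 y, (F0 γ z) ^ 2 / f0 γ z
      ≤ Gg γ * Real.exp (c γ * y ^ (γ + 1)) * y := by
    calc ∫ z in Ioc 0 y, (F0 γ z) ^ 2 / f0 γ z
        ≤ ∫ _z in Ioc 0 y, Gg γ * Real.exp (c γ * y ^ (γ + 1)) := by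
          refine setIntegral_mono_on ((g_integrableOn hγ y).mono_set Ioc_subset_Iic_self)
            (integrableOn_const measure_Ioc_lt_top.ne) measurableSet_Ioc
            (fun z hz => ?_)
          refine (g_le_pos hγ hz.1.le).trans (mul_le_mul_of_nonneg_left ?_ (Gg_pos hγ).le)
          rw [Real.exp_le_exp]
          exact mul_le_mul_of_nonneg_left
            (Real.rpow_le_rpow hz.1.le hz.2 (by linarith)) hc.le
      _ = Gg γ * Real.exp (c γ * y ^ (γ + 1)) * y := by
          rw [setIntegral_const, measureReal_def, Real.volume_Ioc, sub_zero, ENNReal.toReal_ofReal hy,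
            smul_eq_mul]
          ring
  linarith [A_zero_le hγ]

lemma mul_exp_le (hγ : 0 ≤ γ) {y : ℝ} (hy : 0 ≤ y) :
    y * Real.exp (-(c γ / 4 * y)) ≤ 4 / c γ := by
  have hc := c_pos hγ
  have h1 : c γ / 4 * y + 1 ≤ Real.exp (c γ / 4 * y) := Real.add_one_le_exp _
  have h2 : Real.exp (-(c γ / 4 * y)) * Real.exp (c γ / 4 * y) = 1 := by
    rw [← Real.exp_add, neg_add_cancel, Real.exp_zero]
  have h3 : (0:ℝ) < Real.exp (-(c γ / 4 * y)) := Real.exp_pos _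
  have h4 : c γ / 4 * y * Real.exp (-(c γ / 4 * y)) ≤ 1 := by
    have h5 := mul_le_mul_of_nonneg_right
      (show c γ / 4 * y ≤ Real.exp (c γ / 4 * y) by linarith) h3.le
    nlinarith
  rw [le_div_iff₀ hc]
  nlinarith

lemma core (hγ : 0 ≤ γ) (y : ℝ) :
    (F0 γ (-y)) ^ 2 * A γ y ≤ C' γ * Real.exp (-(c γ / 2 * |y| ^ (γ + 1))) := by
  have hc := c_pos hγ
  have hK := K_nonneg hγ
  have hM := M_nonneg hγ
  have hIa := Ia_nonneg γ
  have hG := Gg_pos hγ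
  have hMI : 0 ≤ M γ * Ia γ := mul_nonneg hM hIa
  rcases le_or_gt y 0 with hy | hy
  · have h1 : (F0 γ (-y)) ^ 2 ≤ 1 := by
      nlinarith [F0_nonneg hγ (-y), F0_le_one hγ (-y)]
    calc (F0 γ (-y)) ^ 2 * A γ y
        ≤ 1 * (M γ * Ia γ * Real.exp (-(c γ / 2 * |y| ^ (γ + 1)))) :=
          mul_le_mul h1 (A_le_neg hγ hy) (A_nonneg hγ y) zero_le_one
      _ ≤ C' γ * Real.exp (-(c γ / 2 * |y| ^ (γ + 1))) := by
          rw [one_mul]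
          refine mul_le_mul_of_nonneg_right ?_ (Real.exp_pos _).le
          unfold C'
          nlinarith [sq_nonneg (K γ), mul_nonneg (mul_nonneg (sq_nonneg (K γ)) hG.le)
            (by positivity : (0:ℝ) ≤ 4 / c γ), mul_nonneg (sq_nonneg (K γ)) hMI]
  · have hy' : 0 ≤ y := hy.le
    rw [abs_of_nonneg hy']
    have hX : 0 ≤ y ^ (γ + 1) := Real.rpow_nonneg hy' _
    have h1 := F0_tail hγ (neg_nonpos.2 hy')
    rw [abs_neg, abs_of_nonneg hy'] at h1
    have h2 : (F0 γ (-y)) ^ 2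
        ≤ K γ ^ 2 * Real.exp (-(3 * c γ / 2 * y ^ (γ + 1) + c γ / 4 * y)) := by
      calc (F0 γ (-y)) ^ 2
          ≤ (K γ * Real.exp (-(3 * c γ / 4 * y ^ (γ + 1) + c γ / 8 * y))) ^ 2 :=
            pow_le_pow_left₀ (F0_nonneg hγ _) h1 2
        _ = K γ ^ 2 * Real.exp (-(3 * c γ / 2 * y ^ (γ + 1) + c γ / 4 * y)) := by
            rw [mul_pow, sq (Real.exp _), ← Real.exp_add]
            congr 2
            ring
    have h3 := A_le_pos hγ hy'
    have hexp : Real.exp (-(3 * c γ / 2 * y ^ (γ + 1) + c γ / 4 * y))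
        ≤ Real.exp (-(c γ / 2 * y ^ (γ + 1))) := by
      rw [Real.exp_le_exp]
      nlinarith
    have key : Real.exp (-(3 * c γ / 2 * y ^ (γ + 1) + c γ / 4 * y)) *
        (Gg γ * Real.exp (c γ * y ^ (γ + 1)) * y)
        ≤ Gg γ * (4 / c γ) * Real.exp (-(c γ / 2 * y ^ (γ + 1))) := by
      have e1 : Real.exp (-(3 * c γ / 2 * y ^ (γ + 1) + c γ / 4 * y)) *
          Real.exp (c γ * y ^ (γ + 1))
          = Real.exp (-(c γ / 4 * y)) * Real.exp (-(c γ / 2 * y ^ (γ + 1))) := by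
        rw [← Real.exp_add, ← Real.exp_add]
        congr 1
        ring
      calc Real.exp (-(3 * c γ / 2 * y ^ (γ + 1) + c γ / 4 * y)) *
          (Gg γ * Real.exp (c γ * y ^ (γ + 1)) * y)
          = Gg γ * y * (Real.exp (-(3 * c γ / 2 * y ^ (γ + 1) + c γ / 4 * y)) *
            Real.exp (c γ * y ^ (γ + 1))) := by ring
        _ = Gg γ * (y * Real.exp (-(c γ / 4 * y))) *
            Real.exp (-(c γ / 2 * y ^ (γ + 1))) := by rw [e1]; ring
        _ ≤ Gg γ * (4 / c γ) * Real.exp (-(c γ / 2 * y ^ (γ + 1))) :=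
            mul_le_mul_of_nonneg_right
              (mul_le_mul_of_nonneg_left (mul_exp_le hγ hy') hG.le) (Real.exp_pos _).le
    calc (F0 γ (-y)) ^ 2 * A γ y
        ≤ (K γ ^ 2 * Real.exp (-(3 * c γ / 2 * y ^ (γ + 1) + c γ / 4 * y))) *
          (M γ * Ia γ + Gg γ * Real.exp (c γ * y ^ (γ + 1)) * y) :=
          mul_le_mul h2 h3 (A_nonneg hγ y) (by positivity)
      _ = K γ ^ 2 * (Real.exp (-(3 * c γ / 2 * y ^ (γ + 1) + c γ / 4 * y)) * (M γ * Ia γ))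
          + K γ ^ 2 * (Real.exp (-(3 * c γ / 2 * y ^ (γ + 1) + c γ / 4 * y)) *
            (Gg γ * Real.exp (c γ * y ^ (γ + 1)) * y)) := by ring
      _ ≤ K γ ^ 2 * (Real.exp (-(c γ / 2 * y ^ (γ + 1))) * (M γ * Ia γ))
          + K γ ^ 2 * (Gg γ * (4 / c γ) * Real.exp (-(c γ / 2 * y ^ (γ + 1)))) :=
          add_le_add
            (mul_le_mul_of_nonneg_left (mul_le_mul_of_nonneg_right hexp hMI) (sq_nonneg _))
            (mul_le_mul_of_nonneg_left key (sq_nonneg _))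
      _ = (K γ ^ 2 * (M γ * Ia γ) + K γ ^ 2 * Gg γ * (4 / c γ)) *
            Real.exp (-(c γ / 2 * y ^ (γ + 1))) := by ring
      _ ≤ C' γ * Real.exp (-(c γ / 2 * y ^ (γ + 1))) := by
          refine mul_le_mul_of_nonneg_right ?_ (Real.exp_pos _).le
          unfold C'
          linarith

lemma C'_nonneg (hγ : 0 ≤ γ) : 0 ≤ C' γ := by
  have hc := c_pos hγ
  have hG := Gg_pos hγ
  have hMI : 0 ≤ M γ * Ia γ := mul_nonneg (M_nonneg hγ) (Ia_nonneg γ)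
  unfold C'
  have h1 : 0 ≤ K γ ^ 2 * (M γ * Ia γ) := mul_nonneg (sq_nonneg _) hMI
  have h2 : 0 ≤ K γ ^ 2 * Gg γ * (4 / c γ) := by positivity
  linarith

end Stmt3

/-- exponential bound for the tail functional of `F₀`. -/
theorem stmt_3 (γ : ℝ) (hγ : 0 ≤ γ) :
    ∃ C > (0 : ℝ), ∃ κ > (0 : ℝ), ∀ y : ℝ,
      (F0 γ y - 1) ^ 2 * (∫ z in Set.Iic y, (F0 γ z) ^ 2 / f0 γ z) +
        (F0 γ y) ^ 2 * (∫ z in Set.Ici y, (F0 γ z - 1) ^ 2 / f0 γ z) ≤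
      C * Real.exp (-κ * |y| ^ (γ + 1)) := by
  have hp : 0 < γ + 1 := by linarith
  refine ⟨2 * Stmt3.C' γ + 1, by linarith [Stmt3.C'_nonneg hγ], 1 / (γ + 1),
    by positivity, fun y => ?_⟩
  have hB : (∫ z in Set.Ici y, (F0 γ z - 1) ^ 2 / f0 γ z) = Stmt3.A γ (-y) := by
    rw [integral_Ici_eq_integral_Ioi,
      show Stmt3.A γ (-y) = ∫ x in Set.Iic (-y), (F0 γ x) ^ 2 / f0 γ x from rfl,
      ← integral_comp_neg_Ioi y (fun x => (F0 γ x) ^ 2 / f0 γ x)]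
    refine setIntegral_congr_fun measurableSet_Ioi fun z _ => ?_
    rw [Stmt3.F0_neg hγ, Stmt3.f0_even]
    ring
  have hF : (F0 γ y - 1) ^ 2 = (F0 γ (-y)) ^ 2 := by rw [Stmt3.F0_neg hγ]; ring
  have hA1 : (∫ z in Set.Iic y, (F0 γ z) ^ 2 / f0 γ z) = Stmt3.A γ y := rfl
  rw [hB, hF, hA1]
  have e1 := Stmt3.core hγ y
  have e2 := Stmt3.core hγ (-y)
  rw [neg_neg, abs_neg] at e2
  have hexp : Real.exp (-(1 / (γ + 1)) * |y| ^ (γ + 1))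
      = Real.exp (-(Stmt3.c γ / 2 * |y| ^ (γ + 1))) := by
    congr 1
    unfold Stmt3.c
    ring
  rw [hexp]
  have h3 := Real.exp_pos (-(Stmt3.c γ / 2 * |y| ^ (γ + 1)))
  linarith
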